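/- Let f : D → ℂ be the extension of a holomorphic function f on the unit disc defined for |z| > 1 by f(z) = f(1/z̄) + f'(1/z̄)(z - 1/z̄). Then at every point z with |z| > 1 where f is real-differentiable, the Beltrami coefficient μ(z) = ∂_{z̄}f(z)/∂_z f(z) satisfies μ(z) = -(1/z̄²)(z - 1/z̄) · f''(1/z̄)/f'(1/z̄), and consequently |μ(z)| = ((|z|+1)/|z|²) · (1 - |1/z̄|) · |f''(1/z̄)/f'(1/z̄)|. -/

import Mathlib

open Complex Metric

/-- The Wirtinger derivative `∂_z F` of a map `F : ℂ → ℂ` at `z`. -/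
noncomputable def wirtingerZ (F : ℂ → ℂ) (z : ℂ) : ℂ :=
  (fderiv ℝ F z 1 - Complex.I * fderiv ℝ F z Complex.I) / 2

/-- The Wirtinger derivative `∂_z̄ F` of a map `F : ℂ → ℂ` at `z`. -/
noncomputable def wirtingerZbar (F : ℂ → ℂ) (z : ℂ) : ℂ :=
  (fderiv ℝ F z 1 + Complex.I * fderiv ℝ F z Complex.I) / 2

/-- For the reflection extension `F(z) = f(1/z̄) + f'(1/z̄)(z - 1/z̄)` of a holomorphic `f`
on the unit disc with nonvanishing derivative, at any point `|z| > 1` of real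
differentiability the Beltrami coefficient `μ = ∂_z̄F/∂_zF` equals
`-(1/z̄²)(z - 1/z̄) f''(1/z̄)/f'(1/z̄)`, and consequently
`|μ(z)| = ((|z|+1)/|z|²)(1 - |1/z̄|)|f''(1/z̄)/f'(1/z̄)|`. -/
theorem stmt_9 (f F : ℂ → ℂ)
    (hf : DifferentiableOn ℂ f (Metric.ball (0 : ℂ) 1))
    (hf' : ∀ w ∈ Metric.ball (0 : ℂ) 1, deriv f w ≠ 0)
    (hF : ∀ z : ℂ, 1 < ‖z‖ →
      F z = f (1 / (starRingEnd ℂ z)) +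
        deriv f (1 / (starRingEnd ℂ z)) * (z - 1 / (starRingEnd ℂ z)))
    (z : ℂ) (hz : 1 < ‖z‖) (hdiff : DifferentiableAt ℝ F z) :
    wirtingerZbar F z / wirtingerZ F z =
      -(1 / (starRingEnd ℂ z) ^ 2) * (z - 1 / (starRingEnd ℂ z)) *
        (deriv (deriv f) (1 / (starRingEnd ℂ z)) / deriv f (1 / (starRingEnd ℂ z))) ∧
    ‖wirtingerZbar F z / wirtingerZ F z‖ =
      (‖z‖ + 1) / (‖z‖) ^ 2 *
        (1 - ‖1 / (starRingEnd ℂ z)‖) *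
        ‖deriv (deriv f) (1 / (starRingEnd ℂ z)) /
          deriv f (1 / (starRingEnd ℂ z))‖ := by
  have hz0 : (0 : ℝ) < ‖z‖ := lt_trans one_pos hz
  have hzne : z ≠ 0 := by
    intro h; rw [h] at hz; simp at hz; linarith
  set c : ℂ := starRingEnd ℂ z with hc
  have hcne : c ≠ 0 := by simp [hc, hzne]
  set a : ℂ := c⁻¹ with ha
  have h1c : 1 / c = a := one_div c
  have habs_a : ‖a‖ = ‖z‖⁻¹ := by
    simp [ha, hc, map_inv₀]
  have hamem : a ∈ Metric.ball (0 : ℂ) 1 := by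
    simp only [Metric.mem_ball, dist_zero_right, habs_a]
    exact inv_lt_one_of_one_lt₀ hz
  have hfa : DifferentiableAt ℂ f a := hf.differentiableAt (isOpen_ball.mem_nhds hamem)
  have hdfa : DifferentiableAt ℂ (deriv f) a :=
    (((hf.analyticOnNhd isOpen_ball).deriv) a hamem).differentiableAt
  set A : ℂ := deriv f a with hA
  set B : ℂ := deriv (deriv f) a with hB
  have hAne : A ≠ 0 := hf' a hamem
  set d : ℂ := -(c ^ 2)⁻¹ with hd
  have hconj : HasFDerivAt (fun x : ℂ => starRingEnd ℂ x)
      (Complex.conjCLE.toContinuousLinearMap) z := by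
    exact Complex.conjCLE.toContinuousLinearMap.hasFDerivAt
  set W : ℂ →L[ℝ] ℂ :=
    ((ContinuousLinearMap.smulRight (1 : ℂ →L[ℂ] ℂ) d).restrictScalars ℝ).comp
      Complex.conjCLE.toContinuousLinearMap with hW
  have hw : HasFDerivAt (fun x : ℂ => (starRingEnd ℂ x)⁻¹) W z := by
    have hinv : HasDerivAt (fun y : ℂ => y⁻¹) d c := hasDerivAt_inv hcne
    exact ((hinv.hasFDerivAt.restrictScalars ℝ).comp z hconj)
  have hWapp : ∀ v : ℂ, W v = d * (starRingEnd ℂ v) := by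
    intro v
    simp [hW, mul_comm]
  have hcf : HasFDerivAt (fun x : ℂ => f ((starRingEnd ℂ x)⁻¹))
      (((ContinuousLinearMap.smulRight (1 : ℂ →L[ℂ] ℂ) A).restrictScalars ℝ).comp W) z :=
    ((hfa.hasDerivAt.hasFDerivAt.restrictScalars ℝ).comp z hw)
  have hcd : HasFDerivAt (fun x : ℂ => deriv f ((starRingEnd ℂ x)⁻¹))
      (((ContinuousLinearMap.smulRight (1 : ℂ →L[ℂ] ℂ) B).restrictScalars ℝ).comp W) z :=
    by have h := ((hdfa.hasDerivAt.hasFDerivAt.restrictScalars ℝ).comp z hw); exact h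
  have hsub : HasFDerivAt (fun x : ℂ => x - (starRingEnd ℂ x)⁻¹)
      (ContinuousLinearMap.id ℝ ℂ - W) z := (hasFDerivAt_id z).sub hw
  have hmul := hcd.mul hsub
  have htot := hcf.add hmul
  set L := (((ContinuousLinearMap.smulRight (1 : ℂ →L[ℂ] ℂ) A).restrictScalars ℝ).comp W +
      (deriv f ((starRingEnd ℂ z)⁻¹) • (ContinuousLinearMap.id ℝ ℂ - W) +
        (z - (starRingEnd ℂ z)⁻¹) •
          (((ContinuousLinearMap.smulRight (1 : ℂ →L[ℂ] ℂ) B).restrictScalars ℝ).comp W)))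
    with hL
  have hFeq : F =ᶠ[nhds z] (fun x : ℂ => f ((starRingEnd ℂ x)⁻¹) +
      deriv f ((starRingEnd ℂ x)⁻¹) * (x - (starRingEnd ℂ x)⁻¹)) := by
    have hmem : {x : ℂ | 1 < ‖x‖} ∈ nhds z :=
      (isOpen_lt continuous_const continuous_norm).mem_nhds hz
    filter_upwards [hmem] with x hx
    rw [hF x hx]
    simp only [one_div]
  have hFd : HasFDerivAt F L z := htot.congr_of_eventuallyEq hFeq
  have hfderiv : fderiv ℝ F z = L := hFd.fderiv
  have hW1 : W 1 = d := by rw [hWapp]; simp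
  have hWI : W Complex.I = -(d * Complex.I) := by rw [hWapp]; simp
  have hL1 : fderiv ℝ F z 1 = A + B * d * (z - a) := by
    rw [hfderiv, hL]
    simp only [ContinuousLinearMap.add_apply, ContinuousLinearMap.comp_apply,
      ContinuousLinearMap.smul_apply, ContinuousLinearMap.sub_apply,
      ContinuousLinearMap.id_apply, ContinuousLinearMap.coe_restrictScalars',
      ContinuousLinearMap.smulRight_apply, ContinuousLinearMap.one_apply,
      hW1, smul_eq_mul]
    rw [← hA, ← ha]
    ring
  have hLI : fderiv ℝ F z Complex.I = A * Complex.I - B * d * (z - a) * Complex.I := by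
    rw [hfderiv, hL]
    simp only [ContinuousLinearMap.add_apply, ContinuousLinearMap.comp_apply,
      ContinuousLinearMap.smul_apply, ContinuousLinearMap.sub_apply,
      ContinuousLinearMap.id_apply, ContinuousLinearMap.coe_restrictScalars',
      ContinuousLinearMap.smulRight_apply, ContinuousLinearMap.one_apply,
      hWI, smul_eq_mul]
    rw [← hA, ← ha]
    ring
  have hZ : wirtingerZ F z = A := by
    rw [wirtingerZ, hL1, hLI]
    field_simp
    ring_nf
    rw [Complex.I_sq]
    ring
  have hZbar : wirtingerZbar F z = B * d * (z - a) := by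
    rw [wirtingerZbar, hL1, hLI]
    field_simp
    ring_nf
    rw [Complex.I_sq]
    ring
  have hmu : wirtingerZbar F z / wirtingerZ F z =
      -(1 / c ^ 2) * (z - 1 / c) * (B / A) := by
    rw [hZ, hZbar, hd, h1c]
    field_simp
  constructor
  · rw [hmu, h1c]
  · rw [hmu, h1c]
    set r := ‖z‖ with hr
    have hcabs : ‖c‖ = r := by simp [hc, hr]
    have hza : z - a = ((r ^ 2 - 1 : ℝ) : ℂ) / c := by
      rw [eq_div_iff hcne, sub_mul, ha, inv_mul_cancel₀ hcne, hc, Complex.mul_conj,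
        Complex.normSq_eq_norm_sq]
      push_cast
      ring
    rw [hza, ← hA, ← hB]
    rw [norm_mul, norm_mul, norm_neg, norm_div, norm_div, norm_one, norm_pow,
      Complex.norm_real, Real.norm_eq_abs, norm_div, hcabs, habs_a]
    have h1 : |r ^ 2 - 1| = r ^ 2 - 1 := abs_of_nonneg (by nlinarith)
    rw [h1]
    have hrne : r ≠ 0 := ne_of_gt hz0
    field_simp
    ring
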